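/- Monotone decrease of sheet count along nested scales: let S be a (k,δ,N)-splitting Reifenberg set, r_i = 2^{−mi} r₀ for i = 0,…,M, and B₂(0) ⊇ B_{r₀}(x₀) ⊇ ⋯ ⊇ B_{r_M}(x_M) nested balls with S ∩ B_{r_i/2}(x_i) ≠ ∅ for each i. If δ < δ(n,N,m,M), then there are at most N indices 0 ≤ i ≤ M with diam(A⊥_{x_i,r_i}) ≥ 2^{−m+2} r_i. -/

import Mathlib

open Metric Set Module Pointwise
open scoped RealInnerProductSpace

noncomputable def localHD {X : Type*} [MetricSpace X] (x : X) (r : ℝ) (A B : Set X) : ℝ :=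
  sInf {s : ℝ | 0 < s ∧ A ∩ ball x r ⊆ thickening s B ∧ B ∩ ball x r ⊆ thickening s A}

/-- Distance between two subsets: `inf {|x − y| : x ∈ X, y ∈ Y}`. -/
noncomputable def setDist {X : Type*} [MetricSpace X] (A B : Set X) : ℝ :=
  sInf {d : ℝ | ∃ a ∈ A, ∃ b ∈ B, d = dist a b}

/-- The plane `ℝ^k × {0^{n−k}}` in ℝⁿ. -/
def coordPlane (n k : ℕ) : Set (EuclideanSpace ℝ (Fin n)) :=
  {x | ∀ i : Fin n, k ≤ (i : ℕ) → x i = 0}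

/-- The reduced splitting set
`A⊥_{x,r} = {a ∈ A ∩ (l̂⊥ + x) : dist(l̂ + a, S ∩ B_r(x)) ≤ δ r}`. -/
noncomputable def reducedPerp {n : ℕ} (δ r : ℝ) (x : EuclideanSpace ℝ (Fin n))
    (l : Submodule ℝ (EuclideanSpace ℝ (Fin n)))
    (A S : Set (EuclideanSpace ℝ (Fin n))) : Set (EuclideanSpace ℝ (Fin n)) :=
  {a | a ∈ A ∩ ((fun v => v + x) '' (lᗮ : Set (EuclideanSpace ℝ (Fin n)))) ∧
    setDist ((fun v => v + a) '' (l : Set (EuclideanSpace ℝ (Fin n)))) (S ∩ ball x r) ≤ δ * r}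

/-- The `(k,δ,N)`-splitting Reifenberg condition for `S ⊆ B₂(0ⁿ)`. -/
def SplittingReifenberg (n k N : ℕ) (δ : ℝ) (S : Set (EuclideanSpace ℝ (Fin n))) : Prop :=
  IsClosed S ∧ S ⊆ ball (0 : EuclideanSpace ℝ (Fin n)) 2 ∧
  localHD (0 : EuclideanSpace ℝ (Fin n)) 2 S (coordPlane n k) ≤ 2 * δ ∧
  ∀ x : EuclideanSpace ℝ (Fin n), ∀ r : ℝ, 0 < r →
    ball x r ⊆ ball (0 : EuclideanSpace ℝ (Fin n)) 2 →
    ∃ l : Submodule ℝ (EuclideanSpace ℝ (Fin n)), ∃ A : Set (EuclideanSpace ℝ (Fin n)),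
      finrank ℝ l = k ∧ IsClosed A ∧
      (l : Set (EuclideanSpace ℝ (Fin n))) + A = A ∧
      localHD x r S A ≤ δ * r ∧
      (reducedPerp δ r x l A S).encard ≤ N

/-! ### Auxiliary lemmas -/

section MetricHelpers

variable {X : Type*} [MetricSpace X]

lemma setDist_le {A B : Set X} {a b : X} (ha : a ∈ A) (hb : b ∈ B) :
    setDist A B ≤ dist a b := by
  apply csInf_le
  · exact ⟨0, by rintro d ⟨a', _, b', _, rfl⟩; exact dist_nonneg⟩
  · exact ⟨a, ha, b, hb, rfl⟩

lemma setDist_extract {A B : Set X} (hA : A.Nonempty) (hB : B.Nonempty) {c : ℝ}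
    (h : setDist A B ≤ c) {ε : ℝ} (hε : 0 < ε) :
    ∃ a ∈ A, ∃ b ∈ B, dist a b < c + ε := by
  obtain ⟨a, ha⟩ := hA; obtain ⟨b, hb⟩ := hB
  obtain ⟨d, hd, hdlt⟩ := Real.lt_sInf_add_pos (s := {d : ℝ | ∃ a ∈ A, ∃ b ∈ B, d = dist a b})
    ⟨dist a b, a, ha, b, hb, rfl⟩ hε
  obtain ⟨a', ha', b', hb', rfl⟩ := hd
  have h' : sInf {d : ℝ | ∃ a ∈ A, ∃ b ∈ B, d = dist a b} ≤ c := h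
  exact ⟨a', ha', b', hb', lt_of_lt_of_le hdlt (by linarith)⟩

lemma localHD_extract {x : X} {r c : ℝ} {S A : Set X} (hr : 0 < r)
    (hA : A.Nonempty) (hS : S.Nonempty) (hc : localHD x r S A ≤ c) :
    (∀ p ∈ S ∩ ball x r, infDist p A ≤ c) ∧ (∀ p ∈ A ∩ ball x r, infDist p S ≤ c) := by
  obtain ⟨a₀, ha₀⟩ := hA; obtain ⟨s₀, hs₀⟩ := hS
  set T := {s : ℝ | 0 < s ∧ S ∩ ball x r ⊆ thickening s A ∧ A ∩ ball x r ⊆ thickening s S}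
  have hTne : T.Nonempty := by
    refine ⟨r + dist x a₀ + dist x s₀ + 1, by positivity, ?_, ?_⟩
    · rintro p ⟨-, hp⟩
      rw [mem_thickening_iff]
      refine ⟨a₀, ha₀, ?_⟩
      calc dist p a₀ ≤ dist p x + dist x a₀ := dist_triangle _ _ _
        _ < r + dist x a₀ + dist x s₀ + 1 := by
            have := mem_ball.1 hp; have := dist_nonneg (x := x) (y := s₀); linarith
    · rintro p ⟨-, hp⟩
      rw [mem_thickening_iff]
      refine ⟨s₀, hs₀, ?_⟩
      calc dist p s₀ ≤ dist p x + dist x s₀ := dist_triangle _ _ _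
        _ < r + dist x a₀ + dist x s₀ + 1 := by
            have := mem_ball.1 hp; have := dist_nonneg (x := x) (y := a₀); linarith
  have key : ∀ ε > (0:ℝ), ∃ s ∈ T, s < c + ε := by
    intro ε hε
    obtain ⟨s, hsT, hs⟩ := Real.lt_sInf_add_pos hTne hε
    exact ⟨s, hsT, lt_of_lt_of_le hs (by have : sInf T = localHD x r S A := rfl; linarith)⟩
  constructor
  · intro p hp
    refine le_of_forall_pos_le_add ?_
    intro ε hε
    obtain ⟨s, hsT, hs⟩ := key ε hε
    obtain ⟨z, hz, hdz⟩ := mem_thickening_iff.1 (hsT.2.1 hp)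
    exact le_of_lt (lt_of_le_of_lt (infDist_le_dist_of_mem hz) (lt_trans hdz hs))
  · intro p hp
    refine le_of_forall_pos_le_add ?_
    intro ε hε
    obtain ⟨s, hsT, hs⟩ := key ε hε
    obtain ⟨z, hz, hdz⟩ := mem_thickening_iff.1 (hsT.2.2 hp)
    exact le_of_lt (lt_of_le_of_lt (infDist_le_dist_of_mem hz) (lt_trans hdz hs))

lemma exists_near [ProperSpace X] {A : Set X} (hA : IsClosed A) (hAne : A.Nonempty)
    {p : X} {c : ℝ} (h : infDist p A ≤ c) : ∃ w ∈ A, dist p w ≤ c := by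
  obtain ⟨w, hw, hwd⟩ := hA.exists_infDist_eq_dist hAne p
  exact ⟨w, hw, hwd ▸ h⟩

lemma exists_pair_of_diam {P : Set X} {d : ℝ} (hd : 0 < d) (h : d ≤ diam P) :
    ∃ a ∈ P, ∃ b ∈ P, (15/16) * d ≤ dist a b := by
  by_contra hcon
  push_neg at hcon
  have : diam P ≤ (15/16) * d := diam_le_of_forall_dist_le (by positivity)
    (fun a ha b hb => le_of_lt (hcon a ha b hb))
  linarith

end MetricHelpers

/-! ### Projection helpers -/

noncomputable def pr {V : Type*} [NormedAddCommGroup V] [InnerProductSpace ℝ V]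
    [FiniteDimensional ℝ V] (K : Submodule ℝ V) (v : V) : V := (K.orthogonalProjectionOnto v : V)

section Proj
variable {V : Type*} [NormedAddCommGroup V] [InnerProductSpace ℝ V] [FiniteDimensional ℝ V]

lemma pr_mem (K : Submodule ℝ V) (v : V) : pr K v ∈ K := (K.orthogonalProjectionOnto v).2

lemma pr_sub (K : Submodule ℝ V) (a b : V) : pr K (a - b) = pr K a - pr K b := by
  simp [pr, map_sub]

lemma pr_add (K : Submodule ℝ V) (a b : V) : pr K (a + b) = pr K a + pr K b := by
  simp [pr, map_add]

lemma pr_smul (K : Submodule ℝ V) (t : ℝ) (a : V) : pr K (t • a) = t • pr K a := by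
  simp [pr, map_smul]

lemma pr_norm_le (K : Submodule ℝ V) (v : V) : ‖pr K v‖ ≤ ‖v‖ := by
  have h := (K.orthogonalProjectionOnto).le_opNorm v
  have h2 := Submodule.orthogonalProjectionOnto_norm_le K
  have h3 : ‖K.orthogonalProjectionOnto v‖ = ‖pr K v‖ := rfl
  nlinarith [norm_nonneg v]

lemma pr_eq_self {K : Submodule ℝ V} {v : V} (hv : v ∈ K) : pr K v = v := by
  simpa [pr] using Submodule.starProjection_eq_self_iff.2 hv

lemma pr_eq_zero {K : Submodule ℝ V} {v : V} (hv : v ∈ Kᗮ) : pr K v = 0 := by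
  simp [pr, Submodule.orthogonalProjectionOnto_apply_of_mem_orthogonal hv]

lemma pr_orth_eq_zero {K : Submodule ℝ V} {v : V} (hv : v ∈ K) : pr Kᗮ v = 0 :=
  pr_eq_zero (K.le_orthogonal_orthogonal hv)

lemma pr_add_pr_orth (K : Submodule ℝ V) (v : V) : pr K v + pr Kᗮ v = v :=
  Submodule.starProjection_add_starProjection_orthogonal (K := K) v

lemma pr_pythagoras (K : Submodule ℝ V) (v : V) :
    ‖v‖ ^ 2 = ‖pr K v‖ ^ 2 + ‖pr Kᗮ v‖ ^ 2 := by
  exact Submodule.norm_sq_eq_add_norm_sq_projection v K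

/-- two-sided subspace gap from a one-sided gap, for equal finite ranks. -/
lemma gap_symm (l l' : Submodule ℝ V) (hrk : finrank ℝ l = finrank ℝ l')
    {ε : ℝ} (hε0 : 0 ≤ ε) (hε : ε ≤ 1/2)
    (h : ∀ u ∈ l', ‖pr lᗮ u‖ ≤ ε * ‖u‖) :
    ∀ z ∈ l, ∃ u ∈ l', ‖z - u‖ ≤ 2 * ε * ‖z‖ := by
  have hker : ∀ u ∈ l', pr l u = 0 → u = 0 := by
    intro u hu h0
    have hd := pr_add_pr_orth l u
    rw [h0, zero_add] at hd
    have h3 : ‖u‖ ≤ ε * ‖u‖ := by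
      nth_rewrite 1 [← hd]; exact h u hu
    have h4 : ε * ‖u‖ ≤ (1/2) * ‖u‖ := mul_le_mul_of_nonneg_right hε (norm_nonneg u)
    have h5 : ‖u‖ = 0 := le_antisymm (by linarith) (norm_nonneg u)
    exact norm_eq_zero.1 h5
  let f : l' →ₗ[ℝ] l := (l.orthogonalProjectionOnto).toLinearMap.comp l'.subtype
  have hinj : Function.Injective f := by
    rw [← LinearMap.ker_eq_bot, LinearMap.ker_eq_bot']
    intro u hu
    have : pr l (u : V) = 0 := by
      have : ((f u : l) : V) = 0 := by rw [hu]; rfl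
      simpa [f, pr] using this
    exact Subtype.ext (hker u u.2 this)
  have hsurj : Function.Surjective f := by
    have h1 : finrank ℝ (LinearMap.range f) = finrank ℝ l := by
      rw [LinearMap.finrank_range_of_inj hinj, ← hrk]
    rw [← LinearMap.range_eq_top]
    exact Submodule.eq_top_of_finrank_eq h1
  intro z hz
  obtain ⟨u, hu⟩ := hsurj ⟨z, hz⟩
  have huz : pr l (u : V) = z := by
    have : ((f u : l) : V) = z := by rw [hu]
    simpa [f, pr] using this
  refine ⟨(u : V), u.2, ?_⟩
  have hpyth := pr_pythagoras l (u : V)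
  have h1 : ‖pr lᗮ (u : V)‖ ≤ ε * ‖(u : V)‖ := h _ u.2
  have hnu : ‖(u : V)‖ ≤ 2 * ‖z‖ := by
    rw [huz] at hpyth
    have h1' : ‖pr lᗮ (u:V)‖^2 ≤ ε^2 * ‖(u:V)‖^2 := by
      nlinarith [norm_nonneg (pr lᗮ (u:V)), norm_nonneg (u:V),
        mul_le_mul_of_nonneg_right h1 (norm_nonneg (pr lᗮ (u:V)))]
    nlinarith [norm_nonneg (u : V), norm_nonneg z, sq_nonneg ε,
      mul_le_mul_of_nonneg_left hε hε0, sq_nonneg (‖(u:V)‖ - 2*‖z‖), sq_nonneg (‖(u:V)‖ + 2*‖z‖)]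
  have h2 : z + pr lᗮ (u:V) = (u:V) := by rw [← huz]; exact pr_add_pr_orth l (u:V)
  have hd : z - (u : V) = -(pr lᗮ (u : V)) := by rw [eq_sub_of_add_eq h2]; abel
  calc ‖z - (u:V)‖ = ‖pr lᗮ (u:V)‖ := by rw [hd, norm_neg]
    _ ≤ ε * ‖(u:V)‖ := h1
    _ ≤ ε * (2 * ‖z‖) := mul_le_mul_of_nonneg_left hnu hε0
    _ = 2 * ε * ‖z‖ := by ring

/-- difference of orthogonal projections, from two one-sided gaps. -/
lemma proj_diff (l l' : Submodule ℝ V) {ε : ℝ} (hε0 : 0 ≤ ε)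
    (h1 : ∀ u ∈ l', ‖pr lᗮ u‖ ≤ ε * ‖u‖)
    (h2 : ∀ z ∈ l, ∃ u ∈ l', ‖z - u‖ ≤ 2 * ε * ‖z‖) :
    ∀ w : V, ‖pr lᗮ w - pr l'ᗮ w‖ ≤ 3 * ε * ‖w‖ := by
  intro w
  set v := pr l' w with hv
  set uu := pr l'ᗮ w with huu
  have e1 : ‖pr lᗮ v‖ ≤ ε * ‖w‖ :=
    le_trans (h1 v (pr_mem l' w)) (mul_le_mul_of_nonneg_left (pr_norm_le l' w) hε0)
  set z := pr l uu with hz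
  have hzl : z ∈ l := pr_mem l uu
  have hznorm : ‖z‖ ≤ 2 * ε * ‖uu‖ := by
    obtain ⟨u', hu', hu'z⟩ := h2 z hzl
    have hinner : ⟪uu, z⟫ = ‖z‖^2 := by
      have hdec := pr_add_pr_orth l uu
      have h5 : ⟪pr l uu + pr lᗮ uu, z⟫ = ⟪uu, z⟫ := by rw [hdec]
      rw [← h5, inner_add_left]
      have hperp : ⟪pr lᗮ uu, z⟫ = 0 :=
        Submodule.inner_left_of_mem_orthogonal hzl (pr_mem lᗮ uu)
      rw [hperp, add_zero, ← hz, real_inner_self_eq_norm_sq]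
    have hinner2 : ⟪uu, u'⟫ = 0 := by
      rw [real_inner_comm]
      exact (Submodule.mem_orthogonal l' uu).mp (pr_mem l'ᗮ w) u' hu'
    have hCS : ⟪uu, z - u'⟫ ≤ ‖uu‖ * ‖z - u'‖ := real_inner_le_norm uu (z - u')
    rw [inner_sub_right, hinner, hinner2, sub_zero] at hCS
    have hq : ‖z‖^2 ≤ ‖uu‖ * (2 * ε * ‖z‖) :=
      le_trans hCS (mul_le_mul_of_nonneg_left hu'z (norm_nonneg uu))
    rcases eq_or_lt_of_le (norm_nonneg z) with hz0 | hz0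
    · rw [← hz0]; positivity
    · nlinarith
  have e2 : ‖pr l uu‖ ≤ 2 * ε * ‖w‖ := by
    refine le_trans hznorm ?_
    have := pr_norm_le l'ᗮ w
    nlinarith
  have key : pr lᗮ w - pr l'ᗮ w = pr lᗮ v + pr l (v - w) := by
    have d1 : pr lᗮ w = w - pr l w := eq_sub_of_add_eq' (pr_add_pr_orth l w)
    have d2 : pr l'ᗮ w = w - pr l' w := eq_sub_of_add_eq' (pr_add_pr_orth l' w)
    have d3 : pr lᗮ v = v - pr l v := eq_sub_of_add_eq' (pr_add_pr_orth l v)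
    rw [d1, d2, d3, pr_sub, ← hv]
    abel
  rw [key]
  have e3 : pr l (v - w) = - pr l uu := by
    have hdec := pr_add_pr_orth l' w
    have h6 : v - w = -uu := by
      show pr l' w - w = -(pr l'ᗮ w)
      rw [eq_sub_of_add_eq hdec]; abel
    rw [h6, show -uu = (0:V) - uu by abel, pr_sub]
    simp [pr]
  rw [e3]
  calc ‖pr lᗮ v + -pr l uu‖ ≤ ‖pr lᗮ v‖ + ‖pr l uu‖ := by
        refine le_trans (norm_add_le _ _) ?_; rw [norm_neg]
    _ ≤ ε * ‖w‖ + 2 * ε * ‖w‖ := add_le_add e1 e2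
    _ = 3 * ε * ‖w‖ := by ring

end Proj

/-! ### reducedPerp helpers -/

section RP
variable {n : ℕ}
local notation "E" => EuclideanSpace ℝ (Fin n)

lemma mem_reducedPerp_of {δ r : ℝ} {x : E} {l : Submodule ℝ E} {A S : Set E}
    (hlA : (l : Set E) + A = A) {w z : E} (hw : w ∈ A) (hz : z ∈ S ∩ ball x r)
    (hd : dist w z ≤ δ * r) :
    x + pr lᗮ (w - x) ∈ reducedPerp δ r x l A S := by
  have hdec : pr l (w - x) + pr lᗮ (w - x) = w - x := pr_add_pr_orth l (w - x)
  have haw : x + pr lᗮ (w - x) = -(pr l (w - x)) + w := by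
    rw [show x + pr lᗮ (w - x)
        = x + ((pr l (w - x) + pr lᗮ (w - x)) - pr l (w - x)) by abel, hdec]
    abel
  refine ⟨⟨?_, ?_⟩, ?_⟩
  · rw [haw, ← hlA]
    exact Set.add_mem_add (Submodule.neg_mem l (pr_mem l (w - x))) hw
  · exact ⟨pr lᗮ (w - x), pr_mem lᗮ (w - x), add_comm _ _⟩
  · refine le_trans (setDist_le (a := w) ?_ hz) hd
    refine ⟨pr l (w - x), pr_mem l (w - x), ?_⟩
    show pr l (w - x) + (x + pr lᗮ (w - x)) = w
    rw [show pr l (w - x) + (x + pr lᗮ (w - x)) = (pr l (w - x) + pr lᗮ (w - x)) + x by abel,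
      hdec]
    abel

lemma reducedPerp_proj_close {δ r : ℝ} {x a : E} {l : Submodule ℝ E} {A S : Set E}
    (ha : a ∈ reducedPerp δ r x l A S) (hSne : (S ∩ ball x r).Nonempty) {ε : ℝ} (hε : 0 < ε) :
    ∃ s ∈ S ∩ ball x r, ‖pr lᗮ (s - x) - (a - x)‖ ≤ δ * r + ε := by
  obtain ⟨⟨haA, hax⟩, hsd⟩ := ha
  have hplane : a ∈ (fun v => v + a) '' (l : Set E) := ⟨0, l.zero_mem, by simp⟩
  obtain ⟨p, hp, s, hs, hps⟩ := setDist_extract ⟨a, hplane⟩ hSne hsd hε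
  obtain ⟨v, hv, rfl⟩ := hp
  refine ⟨s, hs, ?_⟩
  obtain ⟨v', hv', rfl⟩ := hax
  have h1 : v' + x - x = v' := by abel
  rw [h1]
  have h2 : pr lᗮ (s - x) - v' = pr lᗮ (s - (v + (v' + x))) := by
    have e1 : pr lᗮ v' = v' := pr_eq_self hv'
    have e2 : pr lᗮ v = 0 := pr_orth_eq_zero hv
    rw [pr_sub lᗮ s (v + (v' + x)), pr_add lᗮ v (v' + x), pr_add lᗮ v' x,
      pr_sub lᗮ s x, e1, e2]
    abel
  rw [h2]
  calc ‖pr lᗮ (s - (v + (v' + x)))‖ ≤ ‖s - (v + (v' + x))‖ := pr_norm_le _ _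
    _ = dist (v + (v' + x)) s := by rw [dist_eq_norm, ← norm_neg]; congr 1; abel
    _ ≤ δ * r + ε := le_of_lt hps

lemma reducedPerp_finite {δ r : ℝ} {x : E} {l : Submodule ℝ E} {A S : Set E} {N' : ℕ}
    (h : (reducedPerp δ r x l A S).encard ≤ N') : (reducedPerp δ r x l A S).Finite :=
  (Set.encard_le_coe_iff.mp h).1

end RP

section Tilt
variable {n : ℕ}
local notation "E" => EuclideanSpace ℝ (Fin n)

set_option maxHeartbeats 2000000 in
lemma tilt_onesided {δ r ρ : ℝ} {x y : E} {l l' : Submodule ℝ E} {A A' S : Set E} {N' : ℕ}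
    (hr : 0 < r) (hρ : 0 < ρ) (hρr : ρ ≤ r) (hδ : 0 < δ) (hδr : δ * r ≤ ρ / 16)
    (hball : ball y ρ ⊆ ball x r)
    (hSc : IsClosed S) (hs₀ : ∃ s₀ ∈ S, s₀ ∈ ball y (ρ / 2))
    (hAc : IsClosed A) (hAne : A.Nonempty) (hA'c : IsClosed A') (hA'ne : A'.Nonempty)
    (hlA : (l : Set E) + A = A) (hl'A : (l' : Set E) + A' = A')
    (hHD : localHD x r S A ≤ δ * r) (hHD' : localHD y ρ S A' ≤ δ * ρ)
    (hN : (reducedPerp δ r x l A S).encard ≤ N') :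
    ∀ u ∈ l', ‖pr lᗮ u‖ ≤ (16 * N' * δ * r / ρ) * ‖u‖ := by
  obtain ⟨s₀, hs₀S, hs₀b⟩ := hs₀
  have hSne : S.Nonempty := ⟨s₀, hs₀S⟩
  obtain ⟨hSA, hAS⟩ := localHD_extract hr hAne hSne hHD
  obtain ⟨hSA', hA'S⟩ := localHD_extract hρ hA'ne hSne hHD'
  have hδρ : δ * ρ ≤ ρ / 16 := le_trans (by nlinarith) hδr
  have hs₀y : dist s₀ y < ρ / 2 := mem_ball.1 hs₀b
  have hs₀' : s₀ ∈ S ∩ ball y ρ := ⟨hs₀S, mem_ball.2 (by linarith)⟩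
  obtain ⟨q₀, hq₀A', hq₀d⟩ := exists_near hA'c hA'ne (hSA' s₀ hs₀')
  have hbound : 0 ≤ 16 * N' * δ * r / ρ := by positivity
  suffices H : ∀ u ∈ l', ‖u‖ = 1 → ‖pr lᗮ u‖ ≤ 16 * N' * δ * r / ρ by
    intro u hu
    rcases eq_or_ne u 0 with rfl | hu0
    · have : pr lᗮ (0:E) = 0 := by simp [pr]
      rw [this]; simp
    · have hn : (0:ℝ) < ‖u‖ := norm_pos_iff.2 hu0
      have h1 := H (‖u‖⁻¹ • u) (l'.smul_mem _ hu)
        (by rw [norm_smul, norm_inv, norm_norm]; field_simp)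
      rw [pr_smul, norm_smul, norm_inv, norm_norm] at h1
      calc ‖pr lᗮ u‖ = ‖u‖ * (‖u‖⁻¹ * ‖pr lᗮ u‖) := by field_simp
        _ ≤ ‖u‖ * (16 * N' * δ * r / ρ) := mul_le_mul_of_nonneg_left h1 (le_of_lt hn)
        _ = (16 * N' * δ * r / ρ) * ‖u‖ := by ring
  intro u hu hu1
  rcases eq_or_lt_of_le (norm_nonneg (pr lᗮ u)) with hc0 | hc0
  · rw [← hc0]; exact hbound
  set c := ‖pr lᗮ u‖ with hc
  set e : E := c⁻¹ • pr lᗮ u with he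
  have hene : ‖e‖ = 1 := by
    rw [he, norm_smul, norm_inv, Real.norm_eq_abs, abs_of_pos hc0, ← hc]
    field_simp
  -- the per-scale chain: every point of the moved plane is near a sheet of `reducedPerp`
  have key : ∀ t ∈ Icc (0:ℝ) (ρ/4), ∃ a ∈ reducedPerp δ r x l A S,
      |⟪pr lᗮ (q₀ + t • u - x) - (a - x), e⟫| ≤ 2 * (δ * r) := by
    intro t ht
    obtain ⟨ht0, ht4⟩ := ht
    set q := q₀ + t • u with hq
    have hqA' : q ∈ A' := by
      rw [hq, add_comm, ← hl'A]
      exact Set.add_mem_add (l'.smul_mem t hu) hq₀A'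
    have hqq₀ : dist q q₀ ≤ ρ / 4 := by
      rw [hq, dist_eq_norm, add_sub_cancel_left, norm_smul, hu1, Real.norm_eq_abs,
        abs_of_nonneg ht0, mul_one]
      exact ht4
    have hqy : dist q y < ρ * (13/16) := by
      calc dist q y ≤ dist q q₀ + dist q₀ y := dist_triangle _ _ _
        _ ≤ dist q q₀ + (dist q₀ s₀ + dist s₀ y) := by linarith [dist_triangle q₀ s₀ y]
        _ < ρ/4 + (δ * ρ + ρ/2) := by
            have hcm : dist q₀ s₀ = dist s₀ q₀ := dist_comm _ _
            linarith
        _ ≤ ρ * (13/16) := by linarith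
    obtain ⟨s, hsS, hsd⟩ := exists_near hSc hSne (hA'S q ⟨hqA', mem_ball.2 (by linarith)⟩)
    have hsy : dist s y < ρ * (14/16) := by
      calc dist s y ≤ dist s q + dist q y := dist_triangle _ _ _
        _ < δ * ρ + ρ * (13/16) := by rw [dist_comm s q]; linarith
        _ ≤ ρ * (14/16) := by linarith
    obtain ⟨w, hwA, hwd⟩ := exists_near hAc hAne
      (hSA s ⟨hsS, hball (mem_ball.2 (by linarith))⟩)
    have hwy : dist w y < ρ * (15/16) := by
      calc dist w y ≤ dist w s + dist s y := dist_triangle _ _ _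
        _ < δ * r + ρ * (14/16) := by rw [dist_comm w s]; linarith
        _ ≤ ρ * (15/16) := by linarith
    obtain ⟨z, hzS, hzd⟩ := exists_near hSc hSne
      (hAS w ⟨hwA, hball (mem_ball.2 (by linarith))⟩)
    have hzy : dist z y < ρ := by
      calc dist z y ≤ dist z w + dist w y := dist_triangle _ _ _
        _ < δ * r + ρ * (15/16) := by rw [dist_comm z w]; linarith
        _ ≤ ρ := by linarith
    refine ⟨x + pr lᗮ (w - x),
      mem_reducedPerp_of hlA hwA ⟨hzS, hball (mem_ball.2 hzy)⟩ hzd, ?_⟩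
    have harr : (x + pr lᗮ (w - x)) - x = pr lᗮ (w - x) := by abel
    rw [harr, ← pr_sub, show (q₀ + t • u - x) - (w - x) = q - w by rw [hq]; abel]
    calc |⟪pr lᗮ (q - w), e⟫| ≤ ‖pr lᗮ (q - w)‖ * ‖e‖ := abs_real_inner_le_norm _ _
      _ = ‖pr lᗮ (q - w)‖ := by rw [hene, mul_one]
      _ ≤ ‖q - w‖ := pr_norm_le _ _
      _ = dist q w := (dist_eq_norm q w).symm
      _ ≤ dist q s + dist s w := dist_triangle _ _ _
      _ ≤ δ * ρ + δ * r := add_le_add hsd hwd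
      _ ≤ 2 * (δ * r) := by nlinarith
  -- the affine formula along the segment
  have hformula : ∀ t : ℝ, ⟪pr lᗮ (q₀ + t • u - x), e⟫ = ⟪pr lᗮ (q₀ - x), e⟫ + t * c := by
    intro t
    rw [show q₀ + t • u - x = (q₀ - x) + t • u by abel, pr_add, pr_smul, inner_add_left,
      real_inner_smul_left]
    congr 1
    rw [he, real_inner_smul_right, real_inner_self_eq_norm_sq, ← hc]
    field_simp
  -- counting via measure
  set P := reducedPerp δ r x l A S with hP
  have hPfin : P.Finite := reducedPerp_finite hN
  set Q : Finset ℝ := hPfin.toFinset.image (fun a => ⟪a - x, e⟫) with hQ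
  have hQcard : Q.card ≤ N' := by
    refine le_trans (Finset.card_image_le) ?_
    rw [← Set.ncard_eq_toFinset_card _ hPfin]
    exact (Set.encard_le_coe_iff_finite_ncard_le.mp hN).2
  set β : ℝ := ⟪pr lᗮ (q₀ - x), e⟫ with hβ
  have hcov : Icc β (β + (ρ/4) * c) ⊆ ⋃ q ∈ Q, Icc (q - 2*(δ*r)) (q + 2*(δ*r)) := by
    intro ξ hξ
    set t := (ξ - β) / c with htdef
    have ht : t ∈ Icc (0:ℝ) (ρ/4) := by
      constructor
      · exact div_nonneg (by linarith [hξ.1]) (le_of_lt hc0)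
      · rw [div_le_iff₀ hc0]
        have := hξ.2
        nlinarith
    obtain ⟨a, haP, haB⟩ := key t ht
    have hξt : ξ = ⟪pr lᗮ (q₀ + t • u - x), e⟫ := by
      rw [hformula, htdef]
      field_simp
      ring
    have hsub : ⟪pr lᗮ (q₀ + t • u - x) - (a - x), e⟫
        = ⟪pr lᗮ (q₀ + t • u - x), e⟫ - ⟪a - x, e⟫ := inner_sub_left _ _ _
    rw [hsub, ← hξt] at haB
    have haQ : ⟪a - x, e⟫ ∈ Q := by
      rw [hQ]
      exact Finset.mem_image_of_mem _ (hPfin.mem_toFinset.2 haP)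
    refine Set.mem_biUnion haQ ?_
    have := abs_le.1 haB
    constructor <;> linarith [this.1, this.2]
  have hmeas := MeasureTheory.measure_mono (μ := MeasureTheory.volume) hcov
  have hle : MeasureTheory.volume (⋃ q ∈ Q, Icc (q - 2*(δ*r)) (q + 2*(δ*r)))
      ≤ ∑ q ∈ Q, MeasureTheory.volume (Icc (q - 2*(δ*r)) (q + 2*(δ*r))) :=
    MeasureTheory.measure_biUnion_finset_le _ _
  have hsum : ∑ q ∈ Q, MeasureTheory.volume (Icc (q - 2*(δ*r)) (q + 2*(δ*r)))
      = (Q.card : ENNReal) * ENNReal.ofReal (4*(δ*r)) := by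
    have : ∀ q ∈ Q, MeasureTheory.volume (Icc (q - 2*(δ*r)) (q + 2*(δ*r)))
        = ENNReal.ofReal (4*(δ*r)) := by
      intro q _
      rw [Real.volume_Icc]
      congr 1
      ring
    rw [Finset.sum_congr rfl this, Finset.sum_const, nsmul_eq_mul]
  have hIcc : MeasureTheory.volume (Icc β (β + (ρ/4) * c)) = ENNReal.ofReal ((ρ/4) * c) := by
    rw [Real.volume_Icc]
    congr 1
    ring
  have hchain : ENNReal.ofReal ((ρ/4) * c) ≤ ENNReal.ofReal ((N' : ℝ) * (4*(δ*r))) := by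
    rw [← hIcc]
    refine le_trans hmeas (le_trans hle ?_)
    rw [hsum, ← ENNReal.ofReal_natCast (Q.card), ← ENNReal.ofReal_mul (Nat.cast_nonneg Q.card)]
    refine ENNReal.ofReal_le_ofReal ?_
    have hcc : (Q.card : ℝ) ≤ (N' : ℝ) := Nat.cast_le.2 hQcard
    exact mul_le_mul_of_nonneg_right hcc (by positivity)
  have hreal : (ρ/4) * c ≤ (N' : ℝ) * (4*(δ*r)) :=
    (ENNReal.ofReal_le_ofReal_iff (by positivity)).1 hchain
  rw [le_div_iff₀ hρ]
  nlinarith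

end Tilt
set_option maxHeartbeats 4000000 in
/-- Along nested balls with rapidly decreasing scales, at most `N` scales can
have large reduced splitting set. -/
theorem finitely_many_bad_scales (n k N m M : ℕ) :
    ∃ δ₀ > (0 : ℝ), ∀ δ : ℝ, 0 < δ → δ < δ₀ →
      ∀ S : Set (EuclideanSpace ℝ (Fin n)), SplittingReifenberg n k N δ S →
      ∀ r₀ : ℝ, 0 < r₀ →
      ∀ r : ℕ → ℝ, (∀ i, r i = (2 : ℝ) ^ (-(m * i : ℤ)) * r₀) →
      ∀ x : ℕ → EuclideanSpace ℝ (Fin n),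
      ∀ A : ℕ → Set (EuclideanSpace ℝ (Fin n)),
      ∀ l : ℕ → Submodule ℝ (EuclideanSpace ℝ (Fin n)),
        ball (x 0) (r 0) ⊆ ball (0 : EuclideanSpace ℝ (Fin n)) 2 →
        (∀ i < M, ball (x (i + 1)) (r (i + 1)) ⊆ ball (x i) (r i)) →
        (∀ i ≤ M, (S ∩ ball (x i) (r i / 2)).Nonempty) →
        (∀ i ≤ M, finrank ℝ (l i) = k ∧ IsClosed (A i) ∧
          (l i : Set (EuclideanSpace ℝ (Fin n))) + A i = A i ∧
          localHD (x i) (r i) S (A i) ≤ δ * r i ∧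
          (reducedPerp δ (r i) (x i) (l i) (A i) S).encard ≤ N) →
        {i : ℕ | i ≤ M ∧
          (2 : ℝ) ^ ((2 : ℤ) - m) * r i ≤
            Metric.diam (reducedPerp δ (r i) (x i) (l i) (A i) S)}.encard ≤ N := by
  set κ : ℝ := (2:ℝ) ^ (-((m : ℤ) * (M+1))) with hκ
  have hκpos : 0 < κ := by positivity
  refine ⟨κ / (1000 * (N+1)), by positivity, ?_⟩
  intro δ hδ0 hδκ S hSR r₀ hr₀ r hrdef x A l hball0 hnest hSball hdata
  set RP : ℕ → Set (EuclideanSpace ℝ (Fin n)) :=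
    fun i => reducedPerp δ (r i) (x i) (l i) (A i) S with hRP
  set BAD := {i : ℕ | i ≤ M ∧ (2:ℝ)^((2:ℤ) - m) * r i ≤ diam (RP i)} with hBAD
  show BAD.encard ≤ N
  -- basic facts about the scales
  have hrpos : ∀ i, 0 < r i := by
    intro i; rw [hrdef i]; positivity
  have hrmono : ∀ i j, i ≤ j → r j ≤ r i := by
    intro i j hij
    rw [hrdef i, hrdef j]
    refine mul_le_mul_of_nonneg_right ?_ (le_of_lt hr₀)
    refine zpow_le_zpow_right₀ one_le_two ?_
    have : (m:ℤ) * i ≤ (m:ℤ) * j := by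
      refine mul_le_mul_of_nonneg_left ?_ (by positivity)
      exact_mod_cast hij
    omega
  have hκr : ∀ i, i ≤ M + 1 → κ * r 0 ≤ r i := by
    intro i hi
    rw [hrdef i, hrdef 0]
    have h0 : (2:ℝ) ^ (-((m:ℤ) * (0:ℕ))) = 1 := by norm_num
    rw [h0, one_mul]
    refine mul_le_mul_of_nonneg_right ?_ (le_of_lt hr₀)
    refine zpow_le_zpow_right₀ one_le_two ?_
    have : (m:ℤ) * i ≤ (m:ℤ) * (M+1) := by
      refine mul_le_mul_of_nonneg_left ?_ (by positivity)
      exact_mod_cast hi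
    omega
  -- the master smallness inequality
  have hmaster : ∀ i, i ≤ M + 1 → ∀ j, 1000 * ((N:ℝ)+1) * (δ * r j) ≤ r i := by
    intro i hi j
    have h1 : δ * r j ≤ δ * r 0 := mul_le_mul_of_nonneg_left (hrmono 0 j (Nat.zero_le j)) (le_of_lt hδ0)
    have h2 : δ * r 0 ≤ (κ / (1000 * (N+1))) * r 0 :=
      mul_le_mul_of_nonneg_right (le_of_lt hδκ) (le_of_lt (hrpos 0))
    have h3 : 1000 * ((N:ℝ)+1) * ((κ / (1000 * (N+1))) * r 0) = κ * r 0 := by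
      field_simp
    have h4 := hκr i hi
    have hNpos : (0:ℝ) < 1000 * ((N:ℝ)+1) := by positivity
    calc 1000 * ((N:ℝ)+1) * (δ * r j) ≤ 1000 * ((N:ℝ)+1) * ((κ / (1000 * (N+1))) * r 0) := by
          refine mul_le_mul_of_nonneg_left (le_trans h1 h2) (le_of_lt hNpos)
      _ = κ * r 0 := h3
      _ ≤ r i := h4
  have hδr_pos : ∀ j, 0 < δ * r j := fun j => mul_pos hδ0 (hrpos j)
  -- `2^(2-m) * r i = 4 * r (i+1)`
  have hfour : ∀ i, (2:ℝ)^((2:ℤ) - m) * r i = 4 * r (i+1) := by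
    intro i
    rw [hrdef i, hrdef (i+1)]
    rw [show (4:ℝ) = (2:ℝ)^(2:ℤ) by norm_num]
    rw [← mul_assoc, ← mul_assoc, ← zpow_add₀ (by norm_num : (2:ℝ) ≠ 0),
      ← zpow_add₀ (by norm_num : (2:ℝ) ≠ 0)]
    congr 2
    push_cast
    ring
  -- chain of balls
  have hchain : ∀ i j, i ≤ j → j ≤ M → ball (x j) (r j) ⊆ ball (x i) (r i) := by
    intro i j hij hj
    induction j with
    | zero => have : i = 0 := Nat.le_zero.mp hij; subst this; rfl
    | succ j' ih =>
      rcases Nat.eq_or_lt_of_le hij with h | h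
      · subst h; rfl
      · have hij' : i ≤ j' := Nat.lt_succ_iff.mp h
        exact subset_trans (hnest j' (by omega)) (ih hij' (by omega))
  -- membership data
  have hSc : IsClosed S := hSR.1
  obtain ⟨s00, hs00⟩ := hSball 0 (Nat.zero_le M)
  have hSne : S.Nonempty := ⟨s00, hs00.1⟩
  have hSballne : ∀ i, i ≤ M → (S ∩ ball (x i) (r i)).Nonempty := by
    intro i hi
    obtain ⟨s, hs⟩ := hSball i hi
    exact ⟨s, hs.1, ball_subset_ball (by linarith [hrpos i]) hs.2⟩
  -- bad scales have two separated sheets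
  have hpair : ∀ i ∈ BAD, ∃ a ∈ RP i, ∃ b ∈ RP i, (15/4) * r (i+1) ≤ dist a b := by
    intro i hi
    obtain ⟨hiM, hdiam⟩ := hi
    rw [hfour i] at hdiam
    obtain ⟨a, ha, b, hb, hab⟩ := exists_pair_of_diam (by linarith [hrpos (i+1)]) hdiam
    exact ⟨a, ha, b, hb, by linarith⟩
  have hAne : ∀ i ∈ BAD, (A i).Nonempty := by
    intro i hi
    obtain ⟨a, ha, -⟩ := hpair i hi
    exact ⟨a, ha.1.1⟩
  -- choice of the separated point at each bad scale
  have hT : ∀ i, ∃ t, i ∈ BAD →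
      t ∈ S ∩ ball (x i) (r i) ∧
      (i < M → (9/5) * r (i+1) ≤ ‖pr (l i)ᗮ (t - x (i+1))‖) := by
    intro i
    by_cases hi : i ∈ BAD
    swap
    · exact ⟨x i, fun h => absurd h hi⟩
    have hiM : i ≤ M := hi.1
    obtain ⟨hrk, hAc, hlA, hHD, hNi⟩ := hdata i hiM
    by_cases hiM' : i < M
    swap
    · obtain ⟨s, hs⟩ := hSballne i hiM
      exact ⟨s, fun _ => ⟨hs, fun h => absurd h hiM'⟩⟩
    obtain ⟨a, ha, b, hb, hab⟩ := hpair i hi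
    obtain ⟨s, hs, hsa⟩ := reducedPerp_proj_close ha (hSballne i hiM) (hδr_pos i)
    obtain ⟨s', hs', hsb⟩ := reducedPerp_proj_close hb (hSballne i hiM) (hδr_pos i)
    -- the projections of s, s' are far apart
    have hδsmall : 4 * (δ * r i) ≤ (1/10) * r (i+1) := by
      have := hmaster (i+1) (by omega) i
      have hN0 : (1:ℝ) ≤ (N:ℝ) + 1 := by linarith [Nat.cast_nonneg (α := ℝ) N]
      nlinarith [hδr_pos i]
    have hss' : (18/5) * r (i+1) ≤ ‖pr (l i)ᗮ (s - x i) - pr (l i)ᗮ (s' - x i)‖ := by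
      have habn : (15/4) * r (i+1) ≤ ‖(a - x i) - (b - x i)‖ := by
        rw [show (a - x i) - (b - x i) = a - b by abel, ← dist_eq_norm]
        exact hab
      have htri : ‖(a - x i) - (b - x i)‖ ≤
          ‖pr (l i)ᗮ (s - x i) - (a - x i)‖ + ‖pr (l i)ᗮ (s - x i) - pr (l i)ᗮ (s' - x i)‖
            + ‖pr (l i)ᗮ (s' - x i) - (b - x i)‖ := by
        have : (a - x i) - (b - x i) =
            -(pr (l i)ᗮ (s - x i) - (a - x i)) + (pr (l i)ᗮ (s - x i) - pr (l i)ᗮ (s' - x i))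
            + (pr (l i)ᗮ (s' - x i) - (b - x i)) := by abel
        rw [this]
        refine le_trans (norm_add_le _ _) ?_
        have := norm_add_le (-(pr (l i)ᗮ (s - x i) - (a - x i)))
          (pr (l i)ᗮ (s - x i) - pr (l i)ᗮ (s' - x i))
        rw [norm_neg] at this
        linarith
      have e1 : ‖pr (l i)ᗮ (s - x i) - (a - x i)‖ ≤ δ * r i + δ * r i := hsa
      have e2 : ‖pr (l i)ᗮ (s' - x i) - (b - x i)‖ ≤ δ * r i + δ * r i := hsb
      linarith [hrpos (i+1)]
    -- pick the one far from x (i+1)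
    have hsplit : (9/5) * r (i+1) ≤ ‖pr (l i)ᗮ (s - x (i+1))‖ ∨
        (9/5) * r (i+1) ≤ ‖pr (l i)ᗮ (s' - x (i+1))‖ := by
      have hdiff : pr (l i)ᗮ (s - x i) - pr (l i)ᗮ (s' - x i)
          = pr (l i)ᗮ (s - x (i+1)) - pr (l i)ᗮ (s' - x (i+1)) := by
        rw [← pr_sub, ← pr_sub]
        congr 1
        abel
      rw [hdiff] at hss'
      by_contra hcon
      push_neg at hcon
      have := norm_sub_le (pr (l i)ᗮ (s - x (i+1))) (pr (l i)ᗮ (s' - x (i+1)))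
      linarith [hcon.1, hcon.2]
    rcases hsplit with h | h
    · exact ⟨s, fun _ => ⟨hs, fun _ => h⟩⟩
    · exact ⟨s', fun _ => ⟨hs', fun _ => h⟩⟩
  choose t ht using hT
  -- if BAD is empty we are done
  rcases Set.eq_empty_or_nonempty BAD with hBE | hBne
  · rw [hBE]; simp
  -- least bad scale
  obtain ⟨i₁, hi₁BAD, hi₁min⟩ := Nat.lt_wfRel.wf.has_min BAD hBne
  have hi₁le : ∀ j ∈ BAD, i₁ ≤ j := fun j hj => Nat.le_of_not_lt (hi₁min j hj)
  have hi₁M : i₁ ≤ M := hi₁BAD.1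
  obtain ⟨hrk₁, hAc₁, hlA₁, hHD₁, hN₁⟩ := hdata i₁ hi₁M
  have hAne₁ : (A i₁).Nonempty := hAne i₁ hi₁BAD
  -- the projection-to-sheet map at scale i₁
  have hπ : ∀ p, ∃ a, p ∈ S ∩ ball (x i₁) (r i₁) →
      a ∈ RP i₁ ∧ ‖a - (x i₁ + pr (l i₁)ᗮ (p - x i₁))‖ ≤ δ * r i₁ := by
    intro p
    by_cases hp : p ∈ S ∩ ball (x i₁) (r i₁)
    swap
    · exact ⟨0, fun h => absurd h hp⟩
    have hinf : infDist p (A i₁) ≤ δ * r i₁ :=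
      (localHD_extract (hrpos i₁) hAne₁ hSne hHD₁).1 p hp
    obtain ⟨w, hwA, hwd⟩ := exists_near hAc₁ hAne₁ hinf
    refine ⟨x i₁ + pr (l i₁)ᗮ (w - x i₁), fun _ => ⟨?_, ?_⟩⟩
    · exact mem_reducedPerp_of hlA₁ hwA hp (by rw [dist_comm]; exact hwd)
    · have h7 : (x i₁ + pr (l i₁)ᗮ (w - x i₁)) - (x i₁ + pr (l i₁)ᗮ (p - x i₁))
          = pr (l i₁)ᗮ (w - x i₁) - pr (l i₁)ᗮ (p - x i₁) := by abel
      rw [h7, ← pr_sub, show (w - x i₁) - (p - x i₁) = w - p by abel]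
      calc ‖pr (l i₁)ᗮ (w - p)‖ ≤ ‖w - p‖ := pr_norm_le _ _
        _ = dist p w := by rw [dist_eq_norm, ← norm_neg]; congr 1; abel
        _ ≤ δ * r i₁ := hwd
  choose π hπ₂ using hπ
  -- membership of the chosen points
  have htmem : ∀ i ∈ BAD, t i ∈ S ∩ ball (x i₁) (r i₁) := by
    intro i hi
    have h1 := (ht i hi).1
    exact ⟨h1.1, hchain i₁ i (hi₁le i hi) hi.1 h1.2⟩
  -- key separation estimate
  have hsep : ∀ i ∈ BAD, ∀ j ∈ BAD, i < j → π (t i) ≠ π (t j) := by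
    intro i hi j hj hij
    have hiM : i < M := lt_of_lt_of_le hij hj.1
    have hjM : j ≤ M := hj.1
    have hi₁i : i₁ ≤ i := hi₁le i hi
    obtain ⟨hrk_i, hAc_i, hlA_i, hHD_i, hN_i⟩ := hdata i hi.1
    -- tilt control between scales i₁ and i
    set ε : ℝ := 16 * N * δ * r i₁ / r i with hε
    have hεpos : 0 ≤ ε := by
      rw [hε]
      refine div_nonneg ?_ (le_of_lt (hrpos i))
      have h1 := le_of_lt (hrpos i₁)
      have h2 : (0:ℝ) ≤ 16 * N * δ := by positivity
      nlinarith
    have hmi : 1000 * ((N:ℝ)+1) * (δ * r i₁) ≤ r i := hmaster i (by omega) i₁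
    have hε12 : ε ≤ 1/2 := by
      rw [hε, div_le_iff₀ (hrpos i)]
      nlinarith [hδr_pos i₁, hrpos i, Nat.cast_nonneg (α := ℝ) N]
    have htilt : ∀ u ∈ l i, ‖pr (l i₁)ᗮ u‖ ≤ ε * ‖u‖ := by
      have hs₀ : ∃ s₀ ∈ S, s₀ ∈ ball (x i) (r i / 2) := by
        obtain ⟨s₀, hs₀⟩ := hSball i hi.1
        exact ⟨s₀, hs₀.1, hs₀.2⟩
      have hδr16 : δ * r i₁ ≤ r i / 16 := by nlinarith [hδr_pos i₁]
      exact tilt_onesided (hrpos i₁) (hrpos i) (hrmono i₁ i hi₁i) hδ0 hδr16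
        (hchain i₁ i hi₁i hi.1) hSc hs₀ hAc₁ hAne₁ hAc_i (hAne i hi)
        hlA₁ hlA_i hHD₁ hHD_i hN₁
    have hgap := gap_symm (l i₁) (l i) (hrk₁.trans hrk_i.symm) hεpos hε12 htilt
    have hdiff := proj_diff (l i₁) (l i) hεpos htilt hgap
    -- the separated points
    have hti := (ht i hi).1
    have htj := (ht j hj).1
    have hsep_i := (ht i hi).2 hiM
    have htj_in : t j ∈ ball (x (i+1)) (r (i+1)) :=
      hchain (i+1) j hij hjM htj.2
    have htj_close : ‖pr (l i)ᗮ (t j - x (i+1))‖ < r (i+1) := by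
      calc ‖pr (l i)ᗮ (t j - x (i+1))‖ ≤ ‖t j - x (i+1)‖ := pr_norm_le _ _
        _ = dist (t j) (x (i+1)) := (dist_eq_norm _ _).symm
        _ < r (i+1) := mem_ball.1 htj_in
    have hsep_pr_i : (4/5) * r (i+1) ≤ ‖pr (l i)ᗮ (t i - t j)‖ := by
      have hdec : pr (l i)ᗮ (t i - t j)
          = pr (l i)ᗮ (t i - x (i+1)) - pr (l i)ᗮ (t j - x (i+1)) := by
        rw [← pr_sub]; congr 1; abel
      have := norm_sub_norm_le (pr (l i)ᗮ (t i - x (i+1))) (pr (l i)ᗮ (t j - x (i+1)))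
      rw [hdec]
      have h9 : (9/5) * r (i+1) ≤ ‖pr (l i)ᗮ (t i - x (i+1))‖ := hsep_i
      linarith [norm_sub_norm_le (pr (l i)ᗮ (t i - x (i+1))) (pr (l i)ᗮ (t j - x (i+1)))]
    -- transfer to scale i₁
    have htt : ‖t i - t j‖ ≤ 2 * r i := by
      have h1 : dist (t i) (x i) < r i := mem_ball.1 hti.2
      have h2 : dist (t j) (x i) < r i := mem_ball.1 ((hchain i j (le_of_lt hij) hjM) htj.2)
      calc ‖t i - t j‖ = dist (t i) (t j) := (dist_eq_norm _ _).symm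
        _ ≤ dist (t i) (x i) + dist (x i) (t j) := dist_triangle _ _ _
        _ = dist (t i) (x i) + dist (t j) (x i) := by rw [dist_comm (x i)]
        _ ≤ 2 * r i := by linarith
    have hdiffttij : ‖pr (l i₁)ᗮ (t i - t j) - pr (l i)ᗮ (t i - t j)‖
        ≤ 3 * ε * ‖t i - t j‖ := hdiff (t i - t j)
    have htilt_small : 3 * ε * ‖t i - t j‖ ≤ (1/10) * r (i+1) := by
      have h1 : 3 * ε * ‖t i - t j‖ ≤ 3 * ε * (2 * r i) := by
        refine mul_le_mul_of_nonneg_left htt (by linarith [hεpos])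
      have h2 : 3 * ε * (2 * r i) = 96 * N * δ * r i₁ := by
        have hri : (r i) ≠ 0 := ne_of_gt (hrpos i)
        rw [hε]
        field_simp
        ring
      have h3 : 96 * (N:ℝ) * δ * r i₁ ≤ (1/10) * r (i+1) := by
        have := hmaster (i+1) (by omega) i₁
        nlinarith [hδr_pos i₁, Nat.cast_nonneg (α := ℝ) N]
      linarith
    have hsep_pr_i₁ : (7/10) * r (i+1) ≤ ‖pr (l i₁)ᗮ (t i - t j)‖ := by
      have := norm_sub_norm_le (pr (l i)ᗮ (t i - t j)) (pr (l i₁)ᗮ (t i - t j))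
      rw [← norm_neg (pr (l i)ᗮ (t i - t j) - pr (l i₁)ᗮ (t i - t j))] at this
      have hneg : -(pr (l i)ᗮ (t i - t j) - pr (l i₁)ᗮ (t i - t j))
          = pr (l i₁)ᗮ (t i - t j) - pr (l i)ᗮ (t i - t j) := by abel
      rw [hneg] at this
      linarith
    -- now the sheets are distinct
    have hπi := hπ₂ (t i) (htmem i hi)
    have hπj := hπ₂ (t j) (htmem j hj)
    have hππ : (7/10) * r (i+1) - 2 * (δ * r i₁) ≤ ‖π (t i) - π (t j)‖ := by
      have hkey : π (t i) - π (t j)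
          = (π (t i) - (x i₁ + pr (l i₁)ᗮ (t i - x i₁)))
            + pr (l i₁)ᗮ (t i - t j)
            - (π (t j) - (x i₁ + pr (l i₁)ᗮ (t j - x i₁))) := by
        have : pr (l i₁)ᗮ (t i - t j)
            = pr (l i₁)ᗮ (t i - x i₁) - pr (l i₁)ᗮ (t j - x i₁) := by
          rw [← pr_sub]; congr 1; abel
        rw [this]; abel
      rw [hkey]
      have htr : ‖pr (l i₁)ᗮ (t i - t j)‖
          - ‖π (t i) - (x i₁ + pr (l i₁)ᗮ (t i - x i₁))‖
          - ‖π (t j) - (x i₁ + pr (l i₁)ᗮ (t j - x i₁))‖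
          ≤ ‖(π (t i) - (x i₁ + pr (l i₁)ᗮ (t i - x i₁)))
            + pr (l i₁)ᗮ (t i - t j)
            - (π (t j) - (x i₁ + pr (l i₁)ᗮ (t j - x i₁)))‖ := by
        set u1 := π (t i) - (x i₁ + pr (l i₁)ᗮ (t i - x i₁))
        set u2 := pr (l i₁)ᗮ (t i - t j)
        set u3 := π (t j) - (x i₁ + pr (l i₁)ᗮ (t j - x i₁))
        have e1 : ‖u2‖ - ‖u1 + u2‖ ≤ ‖u1‖ := by
          have h2 := norm_sub_norm_le u2 (u1 + u2)
          have h3 : u2 - (u1 + u2) = -u1 := by abel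
          rw [h3, norm_neg] at h2
          linarith
        have e2 : ‖u1 + u2‖ - ‖u1 + u2 - u3‖ ≤ ‖u3‖ := by
          have h2 := norm_sub_norm_le (u1 + u2) (u1 + u2 - u3)
          have h3 : u1 + u2 - (u1 + u2 - u3) = u3 := by abel
          rw [h3] at h2
          linarith
        linarith
      linarith [hπi.2, hπj.2, htr, hsep_pr_i₁]
    have hpos : 0 < (7/10) * r (i+1) - 2 * (δ * r i₁) := by
      have := hmaster (i+1) (by omega) i₁
      nlinarith [hδr_pos i₁, Nat.cast_nonneg (α := ℝ) N]
    intro hcontra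
    rw [hcontra] at hππ
    simp at hππ
    linarith
  -- conclude by injectivity
  have hinj : Set.InjOn (fun i => π (t i)) BAD := by
    intro i hi j hj hij
    by_contra hne
    rcases lt_trichotomy i j with h | h | h
    · exact hsep i hi j hj h hij
    · exact hne h
    · exact hsep j hj i hi h hij.symm
  have himg : (fun i => π (t i)) '' BAD ⊆ RP i₁ := by
    rintro _ ⟨i, hi, rfl⟩
    exact (hπ₂ (t i) (htmem i hi)).1
  calc BAD.encard = ((fun i => π (t i)) '' BAD).encard := (hinj.encard_image).symm
    _ ≤ (RP i₁).encard := Set.encard_mono himg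
    _ ≤ N := hN₁
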